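/- Let G be the GTS with states {s, q}, L(s) = {a}, L(q) = {¬a}, may transitions s → s and s → q, and must hypertransition s R⁺ {s, q}. Then there is no KMTS state ⟨M, s_M⟩ whose set of Kripke-Structure concretisations (states related to s_M by some mixed simulation) equals the set of concretisations of ⟨G, s⟩. Hence GTSs are strictly more expressive than KMTSs. -/
import Mathlib


set_option autoImplicit true
set_option maxHeartbeats 800000

structure GTS (σ : Type) (α : Type) where
  init : Set σ
  may : σ → σ → Prop
  must : σ → Set σ → Prop
  labT : σ → α → Prop
  labF : σ → α → Prop
  must_may : ∀ s A, must s A → ∀ t ∈ A, may s t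
  lab_con : ∀ s p, ¬ (labT s p ∧ labF s p)

/-- `H` is a mixed simulation from `M₁` to `M₂`. -/
def IsMixedSim (M₁ : GTS σ₁ α) (M₂ : GTS σ₂ α) (H : σ₁ → σ₂ → Prop) : Prop :=
  ∀ s₁ s₂, H s₁ s₂ →
    ((∀ p, M₂.labT s₂ p → M₁.labT s₁ p) ∧ (∀ p, M₂.labF s₂ p → M₁.labF s₁ p)) ∧
    (∀ s₁', M₁.may s₁ s₁' → ∃ s₂', M₂.may s₂ s₂' ∧ H s₁' s₂') ∧
    (∀ A₂, M₂.must s₂ A₂ → ∃ A₁, M₁.must s₁ A₁ ∧ ∀ s₁' ∈ A₁, ∃ s₂' ∈ A₂, H s₁' s₂')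

/-- `⟨M₁,s₁⟩ ≤_mix ⟨M₂,s₂⟩`. -/
def MixLe (M₁ : GTS σ₁ α) (s₁ : σ₁) (M₂ : GTS σ₂ α) (s₂ : σ₂) : Prop :=
  ∃ H, IsMixedSim M₁ M₂ H ∧ H s₁ s₂

/-- A Kripke Structure viewed as a GTS: complete labelling, and must
hypertransitions are exactly the singleton may transitions. -/
def IsKS (M : GTS σ α) : Prop :=
  (∀ s p, M.labT s p ∨ M.labF s p) ∧
  (∀ s A, M.must s A ↔ ∃ t, A = {t} ∧ M.may s t)

/-- A KMTS is a GTS whose must hypertransitions all have singleton targets. -/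
def IsKMTS (M : GTS σ α) : Prop :=
  ∀ s A, M.must s A → ∃ t, A = ({t} : Set σ)

/-- States of the GTS `G`. -/
inductive GS | s | q
deriving DecidableEq

/-- The GTS `G`: `L(s) = {a}`, `L(q) = {¬a}`, may transitions `s → s`, `s → q`,
and must hypertransition `s R⁺ {s, q}`.  The atomic proposition `a` is `()`. -/
def G : GTS GS Unit where
  init := {GS.s}
  may x _ := x = GS.s
  must x A := x = GS.s ∧ A = Set.univ
  labT x _ := x = GS.s
  labF x _ := x = GS.q
  must_may := by rintro x A ⟨rfl, rfl⟩ t _; rfl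
  lab_con := by rintro x p ⟨h1, h2⟩; subst h1; exact GS.noConfusion h2

/-! ### Auxiliary Kripke structures -/

/-- `p₁`: one `a`-labelled state with a self-loop. -/
def KS1 : GTS Unit Unit where
  init := Set.univ
  may _ _ := True
  must _ A := A = {()}
  labT _ _ := True
  labF _ _ := False
  must_may := by intro s A _ t _; trivial
  lab_con := by rintro s p ⟨_, h⟩; exact h

lemma isKS_KS1 : IsKS KS1 := by
  constructor
  · intro s p; left; trivial
  · intro s A
    constructor
    · intro h; exact ⟨(), h, trivial⟩
    · rintro ⟨t, rfl, _⟩; rfl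

/-- `p₂`: an `a`-labelled state `true` with one transition to the deadlocked
`¬a`-labelled state `false`. -/
def KS2 : GTS Bool Unit where
  init := Set.univ
  may a b := a = true ∧ b = false
  must s A := s = true ∧ A = {false}
  labT x _ := x = true
  labF x _ := x = false
  must_may := by rintro s A ⟨rfl, rfl⟩ t ht; exact ⟨rfl, ht⟩
  lab_con := by rintro s p ⟨h1, h2⟩; rw [h1] at h2; exact Bool.noConfusion h2

lemma isKS_KS2 : IsKS KS2 := by
  constructor
  · intro s p
    cases s
    · right; rfl
    · left; rfl
  · intro s A
    constructor
    · rintro ⟨rfl, rfl⟩; exact ⟨false, rfl, rfl, rfl⟩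
    · rintro ⟨t, rfl, rfl, rfl⟩; exact ⟨rfl, rfl⟩

/-- Counterexample structure: an `a`-labelled state `true` with one transition
to the deadlocked `a`-labelled state `false`. -/
def KS3 : GTS Bool Unit where
  init := Set.univ
  may a b := a = true ∧ b = false
  must s A := s = true ∧ A = {false}
  labT _ _ := True
  labF _ _ := False
  must_may := by rintro s A ⟨rfl, rfl⟩ t ht; exact ⟨rfl, ht⟩
  lab_con := by rintro s p ⟨_, h⟩; exact h

lemma isKS_KS3 : IsKS KS3 := by
  constructor
  · intro s p; left; trivial
  · intro s A
    constructor
    · rintro ⟨rfl, rfl⟩; exact ⟨false, rfl, rfl, rfl⟩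
    · rintro ⟨t, rfl, rfl, rfl⟩; exact ⟨rfl, rfl⟩

/-- The single deadlocked `a`-labelled state. -/
def KD : GTS Unit Unit where
  init := Set.univ
  may _ _ := False
  must _ _ := False
  labT _ _ := True
  labF _ _ := False
  must_may := by intro s A h; exact h.elim
  lab_con := by rintro s p ⟨_, h⟩; exact h

lemma isKS_KD : IsKS KD := by
  constructor
  · intro s p; left; trivial
  · intro s A
    constructor
    · intro h; exact h.elim
    · rintro ⟨t, _, h⟩; exact h

/-! ### Relations to `G` -/

lemma KS1_le_G : MixLe KS1 () G GS.s := by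
  refine ⟨fun _ y => y = GS.s, ?_, rfl⟩
  rintro s₁ s₂ rfl
  refine ⟨⟨fun p _ => trivial, fun p h => GS.noConfusion h⟩, ?_, ?_⟩
  · intro s₁' _; exact ⟨GS.s, rfl, rfl⟩
  · rintro A₂ ⟨_, rfl⟩
    exact ⟨{()}, rfl, fun x _ => ⟨GS.s, trivial, rfl⟩⟩

lemma KS2_le_G : MixLe KS2 true G GS.s := by
  refine ⟨fun b y => (b = true ∧ y = GS.s) ∨ (b = false ∧ y = GS.q), ?_, Or.inl ⟨rfl, rfl⟩⟩
  rintro s₁ s₂ (⟨rfl, rfl⟩ | ⟨rfl, rfl⟩)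
  · refine ⟨⟨fun p _ => rfl, fun p h => GS.noConfusion h⟩, ?_, ?_⟩
    · rintro s₁' ⟨_, rfl⟩
      exact ⟨GS.q, rfl, Or.inr ⟨rfl, rfl⟩⟩
    · rintro A₂ ⟨_, rfl⟩
      exact ⟨{false}, ⟨rfl, rfl⟩, fun x hx => ⟨GS.q, trivial, Or.inr ⟨by simpa using hx, rfl⟩⟩⟩
  · refine ⟨⟨fun p h => GS.noConfusion h, fun p _ => rfl⟩, ?_, ?_⟩
    · rintro s₁' ⟨h, _⟩; exact Bool.noConfusion h
    · rintro A₂ ⟨h, _⟩; exact GS.noConfusion h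

lemma KD_not_le_G : ¬ MixLe KD () G GS.s := by
  rintro ⟨H, hsim, hH⟩
  obtain ⟨-, -, hmust⟩ := hsim () GS.s hH
  obtain ⟨A₁, hA₁, -⟩ := hmust Set.univ ⟨rfl, rfl⟩
  exact hA₁

lemma KS3_not_le_G : ¬ MixLe KS3 true G GS.s := by
  rintro ⟨H, hsim, hH⟩
  obtain ⟨-, -, hmust⟩ := hsim true GS.s hH
  obtain ⟨A₁, ⟨-, rfl⟩, hmatch⟩ := hmust Set.univ ⟨rfl, rfl⟩
  obtain ⟨y, -, hy⟩ := hmatch false rfl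
  cases y with
  | s =>
    obtain ⟨-, -, hmust'⟩ := hsim false GS.s hy
    obtain ⟨A₁', ⟨h, -⟩, -⟩ := hmust' Set.univ ⟨rfl, rfl⟩
    exact Bool.noConfusion h
  | q =>
    obtain ⟨⟨-, hlabF⟩, -, -⟩ := hsim false GS.q hy
    exact hlabF () rfl

/-- No KMTS state has the same set of Kripke-Structure concretisations as the
GTS state `⟨G,s⟩`: GTSs are strictly more expressive than KMTSs. -/
theorem gts_strictly_more_expressive (σ : Type) (M : GTS σ Unit) (hM : IsKMTS M)
    (sM : σ) :
    ¬ (∀ (τ : Type) (K : GTS τ Unit), IsKS K → ∀ sK : τ,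
        (MixLe K sK M sM ↔ MixLe K sK G GS.s)) := by
  intro hiff
  obtain ⟨H₁, hsim₁, hH₁⟩ : MixLe KS1 () M sM := (hiff Unit KS1 isKS_KS1 ()).mpr KS1_le_G
  obtain ⟨H₂, hsim₂, hH₂⟩ : MixLe KS2 true M sM := (hiff Bool KS2 isKS_KS2 true).mpr KS2_le_G
  -- From `p₁ ≤ M`: `sM` (and any must-successor) is not labelled `¬a`; and
  -- every must-successor `t` of `sM` satisfies `H₁ () t`.
  have hlabF_sM : ¬ M.labF sM () := fun h => ((hsim₁ () sM hH₁).1.2 () h)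
  by_cases hmust : ∃ A, M.must sM A
  · -- `M` has a must transition from `sM`: use the counterexample `KS3`.
    -- For every must target `t` of `sM`, we have `H₁ () t` and `H₂ false t`.
    have key : ∀ t, M.must sM {t} → H₁ () t ∧ H₂ false t := by
      intro t ht
      constructor
      · obtain ⟨A₁, hA₁, hmatch⟩ := (hsim₁ () sM hH₁).2.2 {t} ht
        obtain ⟨y, hy, hHy⟩ := hmatch () (by rw [show A₁ = {()} from hA₁]; rfl)
        rwa [show y = t from hy] at hHy
      · obtain ⟨A₁, hA₁, hmatch⟩ := (hsim₂ true sM hH₂).2.2 {t} ht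
        obtain ⟨y, hy, hHy⟩ := hmatch false (by rw [hA₁.2]; rfl)
        rwa [show y = t from hy] at hHy
    have hKS3M : MixLe KS3 true M sM := by
      refine ⟨fun b t => (b = true ∧ t = sM) ∨ (b = false ∧ M.must sM {t}), ?_,
        Or.inl ⟨rfl, rfl⟩⟩
      rintro s₁ s₂ (⟨rfl, rfl⟩ | ⟨rfl, hmt⟩)
      · refine ⟨⟨fun p _ => trivial, fun p h => hlabF_sM (by cases p; exact h)⟩, ?_, ?_⟩
        · rintro s₁' ⟨-, rfl⟩
          obtain ⟨A, hA⟩ := hmust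
          obtain ⟨t, rfl⟩ := hM s₂ A hA
          exact ⟨t, M.must_may s₂ {t} hA t rfl, Or.inr ⟨rfl, hA⟩⟩
        · intro A₂ hA₂
          obtain ⟨t, rfl⟩ := hM s₂ A₂ hA₂
          exact ⟨{false}, ⟨rfl, rfl⟩, fun x hx => ⟨t, rfl, Or.inr ⟨by simpa using hx, hA₂⟩⟩⟩
      · obtain ⟨h₁t, h₂t⟩ := key s₂ hmt
        refine ⟨⟨fun p _ => trivial, fun p h => (hsim₁ () s₂ h₁t).1.2 p h⟩, ?_, ?_⟩
        · rintro s₁' ⟨h, -⟩; exact Bool.noConfusion h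
        · intro A₂ hA₂
          -- `false` simulates a deadlocked state of `p₂`, so `s₂` has no musts.
          obtain ⟨A₁, ⟨h, -⟩, -⟩ := (hsim₂ false s₂ h₂t).2.2 A₂ hA₂
          exact Bool.noConfusion h
    exact KS3_not_le_G ((hiff Bool KS3 isKS_KS3 true).mp hKS3M)
  · -- `M` has no must transition from `sM`: the deadlocked `a`-state
    -- concretises `⟨M, sM⟩` but not `⟨G, s⟩`.
    have hKDM : MixLe KD () M sM := by
      refine ⟨fun _ t => t = sM, ?_, rfl⟩
      rintro s₁ s₂ rfl
      refine ⟨⟨fun p _ => trivial, fun p h => hlabF_sM (by cases p; exact h)⟩, ?_, ?_⟩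
      · intro s₁' h; exact h.elim
      · intro A₂ hA₂; exact absurd ⟨A₂, hA₂⟩ hmust
    exact KD_not_le_G ((hiff Unit KD isKS_KD ()).mp hKDM)
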